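/- The group ⟨s₁,s₂,v,h | [s₁,h], [s₂,h], s₁²h, s₂²h, vhv⁻¹h, s₁s₂v²h⟩ is isomorphic to the group ⟨s,v | sv²s⁻¹ = v⁻², vs²v⁻¹ = s⁻²⟩, via the map sending s₁ ↦ s, s₂ ↦ sv⁻², h ↦ s⁻². -/

import Mathlib

open FreeGroup

/-- Relators of π₁(M₆) = ⟨s₁,s₂,v,h | [s₁,h], [s₂,h], s₁²h, s₂²h, vhv⁻¹h, s₁s₂v²h⟩,
generators s₁=0, s₂=1, v=2, h=3. -/
def relsM6 : Set (FreeGroup (Fin 4)) :=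
  { of 0 * of 3 * (of 0)⁻¹ * (of 3)⁻¹,
    of 1 * of 3 * (of 1)⁻¹ * (of 3)⁻¹,
    of 0 ^ 2 * of 3, of 1 ^ 2 * of 3,
    of 2 * of 3 * (of 2)⁻¹ * of 3,
    of 0 * of 1 * of 2 ^ 2 * of 3 }

/-- Relators of ⟨s,v | sv²s⁻¹ = v⁻², vs²v⁻¹ = s⁻²⟩, generators s=0, v=1. -/
def relsM6' : Set (FreeGroup (Fin 2)) :=
  { of 0 * of 1 ^ 2 * (of 0)⁻¹ * of 1 ^ 2,
    of 1 * of 0 ^ 2 * (of 1)⁻¹ * of 0 ^ 2 }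

lemma relOne {α : Type} {rels : Set (FreeGroup α)} {r : FreeGroup α} (h : r ∈ rels) :
    PresentedGroup.mk rels r = 1 :=
  (QuotientGroup.eq_one_iff r).2 (Subgroup.subset_normalClosure h)

section M6facts

local notation "S1" => (PresentedGroup.of 0 : PresentedGroup relsM6)
local notation "S2" => (PresentedGroup.of 1 : PresentedGroup relsM6)
local notation "V" => (PresentedGroup.of 2 : PresentedGroup relsM6)
local notation "H" => (PresentedGroup.of 3 : PresentedGroup relsM6)

lemma M6_R3 : S1 ^ 2 * H = 1 := by
  have h : (of 0 ^ 2 * of 3 : FreeGroup (Fin 4)) ∈ relsM6 :=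
    Set.mem_insert_of_mem _ (Set.mem_insert_of_mem _ (Set.mem_insert _ _))
  have := relOne h
  simp only [_root_.map_mul, _root_.map_pow] at this
  exact this

lemma M6_R4 : S2 ^ 2 * H = 1 := by
  have h : (of 1 ^ 2 * of 3 : FreeGroup (Fin 4)) ∈ relsM6 :=
    Set.mem_insert_of_mem _ (Set.mem_insert_of_mem _ (Set.mem_insert_of_mem _ (Set.mem_insert _ _)))
  have := relOne h
  simp only [_root_.map_mul, _root_.map_pow] at this
  exact this

lemma M6_R5 : V * H * V⁻¹ * H = 1 := by
  have h : (of 2 * of 3 * (of 2)⁻¹ * of 3 : FreeGroup (Fin 4)) ∈ relsM6 :=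
    Set.mem_insert_of_mem _ (Set.mem_insert_of_mem _ (Set.mem_insert_of_mem _
      (Set.mem_insert_of_mem _ (Set.mem_insert _ _))))
  have := relOne h
  simp only [_root_.map_mul, _root_.map_inv] at this
  exact this

lemma M6_R6 : S1 * S2 * V ^ 2 * H = 1 := by
  have h : (of 0 * of 1 * of 2 ^ 2 * of 3 : FreeGroup (Fin 4)) ∈ relsM6 :=
    Set.mem_insert_of_mem _ (Set.mem_insert_of_mem _ (Set.mem_insert_of_mem _
      (Set.mem_insert_of_mem _ (Set.mem_insert_of_mem _ rfl))))
  have := relOne h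
  simp only [_root_.map_mul, _root_.map_pow] at this
  exact this

lemma M6_H : H = (S1 ^ 2)⁻¹ := eq_inv_of_mul_eq_one_right M6_R3

lemma M6_Vsq : V ^ 2 = S2⁻¹ * S1 := by
  have h1 : S1 * S2 * V ^ 2 = H⁻¹ := eq_inv_of_mul_eq_one_left M6_R6
  rw [M6_H, inv_inv] at h1
  have h2 : S2 * V ^ 2 = S1 := by
    calc S2 * V ^ 2 = S1⁻¹ * (S1 * S2 * V ^ 2) := by group
    _ = S1⁻¹ * S1 ^ 2 := by rw [h1]
    _ = S1 := by group
  calc V ^ 2 = S2⁻¹ * (S2 * V ^ 2) := by group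
  _ = S2⁻¹ * S1 := by rw [h2]

lemma M6_S2sq : S2 ^ 2 = S1 ^ 2 := by
  have h4 : S2 ^ 2 = H⁻¹ := eq_inv_of_mul_eq_one_left M6_R4
  rw [h4, M6_H, inv_inv]

lemma M6_h1 : S1 * V ^ 2 * S1⁻¹ * V ^ 2 = 1 := by
  rw [M6_Vsq]
  have hS2 : S2⁻¹ * S2⁻¹ = (S2 ^ 2)⁻¹ := by rw [pow_two, mul_inv_rev]
  calc S1 * (S2⁻¹ * S1) * S1⁻¹ * (S2⁻¹ * S1) = S1 * (S2⁻¹ * S2⁻¹) * S1 := by group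
  _ = S1 * (S2 ^ 2)⁻¹ * S1 := by rw [hS2]
  _ = S1 * (S1 ^ 2)⁻¹ * S1 := by rw [M6_S2sq]
  _ = 1 := by group

lemma M6_h2 : V * S1 ^ 2 * V⁻¹ * S1 ^ 2 = 1 := by
  have e5 : V * H * V⁻¹ = H⁻¹ := eq_inv_of_mul_eq_one_left M6_R5
  have e5' : V * H⁻¹ * V⁻¹ = H := by
    rw [show V * H⁻¹ * V⁻¹ = (V * H * V⁻¹)⁻¹ by group, e5, inv_inv]
  have hs : S1 ^ 2 = H⁻¹ := by rw [M6_H, inv_inv]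
  rw [hs]
  calc V * H⁻¹ * V⁻¹ * H⁻¹ = (V * H⁻¹ * V⁻¹) * H⁻¹ := by group
  _ = H * H⁻¹ := by rw [e5']
  _ = 1 := by group

end M6facts

section GenericFacts
variable {G : Type*} [Group G] (a b : G)
  (h1 : a * b ^ 2 * a⁻¹ * b ^ 2 = 1) (h2 : b * a ^ 2 * b⁻¹ * a ^ 2 = 1)

lemma gen_G1 : a * (a⁻¹ * a⁻¹) * a⁻¹ * (a⁻¹ * a⁻¹)⁻¹ = 1 := by group

lemma gen_G3 : a ^ 2 * (a⁻¹ * a⁻¹) = 1 := by group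

lemma gen_G6 : a * (a * (b⁻¹ * b⁻¹)) * b ^ 2 * (a⁻¹ * a⁻¹) = 1 := by group

include h1 h2 in
lemma gen_comm : b ^ 2 * a ^ 2 = a ^ 2 * b ^ 2 := by
  have e2 : b * a ^ 2 * b⁻¹ = (a ^ 2)⁻¹ := eq_inv_of_mul_eq_one_left h2
  have e2' : b * (a ^ 2)⁻¹ * b⁻¹ = a ^ 2 := by
    rw [show b * (a ^ 2)⁻¹ * b⁻¹ = (b * a ^ 2 * b⁻¹)⁻¹ by group, e2, inv_inv]
  have key : b ^ 2 * a ^ 2 * (b ^ 2)⁻¹ = a ^ 2 := by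
    calc b ^ 2 * a ^ 2 * (b ^ 2)⁻¹ = b * (b * a ^ 2 * b⁻¹) * b⁻¹ := by
          simp only [pow_two, mul_inv_rev, mul_assoc]
    _ = b * (a ^ 2)⁻¹ * b⁻¹ := by rw [e2]
    _ = a ^ 2 := e2'
  calc b ^ 2 * a ^ 2 = (b ^ 2 * a ^ 2 * (b ^ 2)⁻¹) * b ^ 2 := by group
  _ = a ^ 2 * b ^ 2 := by rw [key]

include h1 h2 in
lemma gen_G2 :
    (a * (b⁻¹ * b⁻¹)) * (a⁻¹ * a⁻¹) * (a * (b⁻¹ * b⁻¹))⁻¹ * (a⁻¹ * a⁻¹)⁻¹ = 1 := by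
  have H : Commute (b ^ 2) (a ^ 2) := gen_comm a b h1 h2
  have k : (a ^ 2)⁻¹ * b ^ 2 = b ^ 2 * (a ^ 2)⁻¹ := (H.inv_right.eq).symm
  have hb : b⁻¹ * b⁻¹ = (b ^ 2)⁻¹ := by rw [pow_two, mul_inv_rev]
  have ha : a⁻¹ * a⁻¹ = (a ^ 2)⁻¹ := by rw [pow_two, mul_inv_rev]
  rw [hb, ha]
  calc (a * (b ^ 2)⁻¹) * (a ^ 2)⁻¹ * (a * (b ^ 2)⁻¹)⁻¹ * ((a ^ 2)⁻¹)⁻¹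
      = a * (b ^ 2)⁻¹ * ((a ^ 2)⁻¹ * b ^ 2) * a := by group
  _ = a * (b ^ 2)⁻¹ * (b ^ 2 * (a ^ 2)⁻¹) * a := by rw [k]
  _ = 1 := by group

include h1 h2 in
lemma gen_G4 : (a * (b⁻¹ * b⁻¹)) ^ 2 * (a⁻¹ * a⁻¹) = 1 := by
  have e1 : a * b ^ 2 * a⁻¹ = (b ^ 2)⁻¹ := eq_inv_of_mul_eq_one_left h1
  have e1' : a * (b ^ 2)⁻¹ * a⁻¹ = b ^ 2 := by
    rw [show a * (b ^ 2)⁻¹ * a⁻¹ = (a * b ^ 2 * a⁻¹)⁻¹ by group, e1, inv_inv]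
  have H : Commute (a ^ 2) (b ^ 2) := (gen_comm a b h1 h2).symm
  have k2 : a ^ 2 * (b ^ 2)⁻¹ = (b ^ 2)⁻¹ * a ^ 2 := H.inv_right.eq
  have hb : b⁻¹ * b⁻¹ = (b ^ 2)⁻¹ := by rw [pow_two, mul_inv_rev]
  have ha : a⁻¹ * a⁻¹ = (a ^ 2)⁻¹ := by rw [pow_two, mul_inv_rev]
  rw [hb, ha]
  calc (a * (b ^ 2)⁻¹) ^ 2 * (a ^ 2)⁻¹
      = (a * (b ^ 2)⁻¹) * (a * (b ^ 2)⁻¹) * (a ^ 2)⁻¹ := by rw [pow_two]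
  _ = (a * (b ^ 2)⁻¹ * a⁻¹) * (a ^ 2 * (b ^ 2)⁻¹) * (a ^ 2)⁻¹ := by group
  _ = (a * (b ^ 2)⁻¹ * a⁻¹) * ((b ^ 2)⁻¹ * a ^ 2) * (a ^ 2)⁻¹ := by rw [k2]
  _ = b ^ 2 * ((b ^ 2)⁻¹ * a ^ 2) * (a ^ 2)⁻¹ := by rw [e1']
  _ = 1 := by group

include h2 in
lemma gen_G5 : b * (a⁻¹ * a⁻¹) * b⁻¹ * (a⁻¹ * a⁻¹) = 1 := by
  have e2 : b * a ^ 2 * b⁻¹ = (a ^ 2)⁻¹ := eq_inv_of_mul_eq_one_left h2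
  have e2' : b * (a ^ 2)⁻¹ * b⁻¹ = a ^ 2 := by
    rw [show b * (a ^ 2)⁻¹ * b⁻¹ = (b * a ^ 2 * b⁻¹)⁻¹ by group, e2, inv_inv]
  have ha : a⁻¹ * a⁻¹ = (a ^ 2)⁻¹ := by rw [pow_two, mul_inv_rev]
  rw [ha]
  calc b * (a ^ 2)⁻¹ * b⁻¹ * (a ^ 2)⁻¹
      = (b * (a ^ 2)⁻¹ * b⁻¹) * (a ^ 2)⁻¹ := by group
  _ = a ^ 2 * (a ^ 2)⁻¹ := by rw [e2']
  _ = 1 := by group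

end GenericFacts

section M6'facts

local notation "A" => (PresentedGroup.of 0 : PresentedGroup relsM6')
local notation "B" => (PresentedGroup.of 1 : PresentedGroup relsM6')

lemma M6'_r1 : A * B ^ 2 * A⁻¹ * B ^ 2 = 1 := by
  have h : (of 0 * of 1 ^ 2 * (of 0)⁻¹ * of 1 ^ 2 : FreeGroup (Fin 2)) ∈ relsM6' :=
    Set.mem_insert _ _
  have := relOne h
  simp only [_root_.map_mul, _root_.map_pow, _root_.map_inv] at this
  exact this

lemma M6'_r2 : B * A ^ 2 * B⁻¹ * A ^ 2 = 1 := by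
  have h : (of 1 * of 0 ^ 2 * (of 1)⁻¹ * of 0 ^ 2 : FreeGroup (Fin 2)) ∈ relsM6' :=
    Set.mem_insert_of_mem _ rfl
  have := relOne h
  simp only [_root_.map_mul, _root_.map_pow, _root_.map_inv] at this
  exact this

end M6'facts

/-- the map M6 → M6' on generators -/
def fM6 : Fin 4 → PresentedGroup relsM6'
  | 0 => PresentedGroup.of 0
  | 1 => PresentedGroup.of 0 * ((PresentedGroup.of 1)⁻¹ * (PresentedGroup.of 1)⁻¹)
  | 2 => PresentedGroup.of 1
  | 3 => (PresentedGroup.of 0)⁻¹ * (PresentedGroup.of 0)⁻¹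

/-- the map M6' → M6 on generators -/
def gM6 : Fin 2 → PresentedGroup relsM6
  | 0 => PresentedGroup.of 0
  | 1 => PresentedGroup.of 2

lemma fM6_rels : ∀ r ∈ relsM6, FreeGroup.lift fM6 r = 1 := by
  intro r hr
  simp only [relsM6, Set.mem_insert_iff, Set.mem_singleton_iff] at hr
  obtain rfl | rfl | rfl | rfl | rfl | rfl := hr
  · exact gen_G1 (PresentedGroup.of 0)
  · exact gen_G2 (PresentedGroup.of 0) (PresentedGroup.of 1) M6'_r1 M6'_r2
  · exact gen_G3 (PresentedGroup.of 0)
  · exact gen_G4 (PresentedGroup.of 0) (PresentedGroup.of 1) M6'_r1 M6'_r2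
  · exact gen_G5 (PresentedGroup.of 0) (PresentedGroup.of 1) M6'_r2
  · exact gen_G6 (PresentedGroup.of 0) (PresentedGroup.of 1)

lemma gM6_rels : ∀ r ∈ relsM6', FreeGroup.lift gM6 r = 1 := by
  intro r hr
  simp only [relsM6', Set.mem_insert_iff, Set.mem_singleton_iff] at hr
  obtain rfl | rfl := hr
  · exact M6_h1
  · exact M6_h2

/-- the homomorphism M6 → M6' -/
def phiM6 : PresentedGroup relsM6 →* PresentedGroup relsM6' := PresentedGroup.toGroup fM6_rels

/-- the homomorphism M6' → M6 -/
def psiM6 : PresentedGroup relsM6' →* PresentedGroup relsM6 := PresentedGroup.toGroup gM6_rels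

lemma phi0 : phiM6 (PresentedGroup.of 0) = PresentedGroup.of 0 :=
  PresentedGroup.toGroup.of fM6_rels
lemma phi1 : phiM6 (PresentedGroup.of 1) =
    PresentedGroup.of 0 * ((PresentedGroup.of 1)⁻¹ * (PresentedGroup.of 1)⁻¹) :=
  PresentedGroup.toGroup.of fM6_rels
lemma phi2 : phiM6 (PresentedGroup.of 2) = PresentedGroup.of 1 :=
  PresentedGroup.toGroup.of fM6_rels
lemma phi3 : phiM6 (PresentedGroup.of 3) =
    (PresentedGroup.of 0)⁻¹ * (PresentedGroup.of 0)⁻¹ :=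
  PresentedGroup.toGroup.of fM6_rels

lemma psi0 : psiM6 (PresentedGroup.of 0) = PresentedGroup.of 0 :=
  PresentedGroup.toGroup.of gM6_rels
lemma psi1 : psiM6 (PresentedGroup.of 1) = PresentedGroup.of 2 :=
  PresentedGroup.toGroup.of gM6_rels

lemma compA0 : psiM6 (phiM6 (PresentedGroup.of 0)) = PresentedGroup.of 0 := by
  rw [phi0, psi0]

lemma compA2 : psiM6 (phiM6 (PresentedGroup.of 2)) = PresentedGroup.of 2 := by
  rw [phi2, psi1]

lemma compA3 : psiM6 (phiM6 (PresentedGroup.of 3)) = PresentedGroup.of 3 := by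
  rw [phi3, psiM6.map_mul, psiM6.map_inv, psi0]
  rw [show ((PresentedGroup.of 0 : PresentedGroup relsM6)⁻¹ * (PresentedGroup.of 0)⁻¹)
      = (PresentedGroup.of 0 ^ 2)⁻¹ by group, ← M6_H]

lemma compA1 : psiM6 (phiM6 (PresentedGroup.of 1)) = PresentedGroup.of 1 := by
  rw [phi1, psiM6.map_mul, psiM6.map_mul, psiM6.map_inv, psi0, psi1]
  have hv : (PresentedGroup.of 1 : PresentedGroup relsM6) * (PresentedGroup.of 2) ^ 2
      = PresentedGroup.of 0 := by
    rw [M6_Vsq]; group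
  calc (PresentedGroup.of 0 : PresentedGroup relsM6) *
        ((PresentedGroup.of 2)⁻¹ * (PresentedGroup.of 2)⁻¹)
      = (PresentedGroup.of 1 * (PresentedGroup.of 2) ^ 2) *
        ((PresentedGroup.of 2)⁻¹ * (PresentedGroup.of 2)⁻¹) := by rw [hv]
  _ = PresentedGroup.of 1 := by
        have hv2 : (PresentedGroup.of 2 : PresentedGroup relsM6)⁻¹ * (PresentedGroup.of 2)⁻¹
            = ((PresentedGroup.of 2) ^ 2)⁻¹ := by rw [pow_two, mul_inv_rev]
        rw [hv2]; group

lemma compB0 : phiM6 (psiM6 (PresentedGroup.of 0)) = PresentedGroup.of 0 := by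
  rw [psi0, phi0]

lemma compB1 : phiM6 (psiM6 (PresentedGroup.of 1)) = PresentedGroup.of 1 := by
  rw [psi1, phi2]

/-- π₁(M₆) is isomorphic to ⟨s,v | sv²s⁻¹ = v⁻², vs²v⁻¹ = s⁻²⟩ via
s₁ ↦ s, s₂ ↦ sv⁻², v ↦ v, h ↦ s⁻². -/
theorem stmt11 :
    ∃ e : PresentedGroup relsM6 ≃* PresentedGroup relsM6',
      e (PresentedGroup.of 0) = PresentedGroup.of 0 ∧
      e (PresentedGroup.of 1) =
        PresentedGroup.of 0 * ((PresentedGroup.of 1)⁻¹ * (PresentedGroup.of 1)⁻¹) ∧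
      e (PresentedGroup.of 2) = PresentedGroup.of 1 ∧
      e (PresentedGroup.of 3) = (PresentedGroup.of 0)⁻¹ * (PresentedGroup.of 0)⁻¹ := by
  have hgf : psiM6.comp phiM6 = MonoidHom.id _ := by
    ext x
    fin_cases x
    · exact compA0
    · exact compA1
    · exact compA2
    · exact compA3
  have hfg : phiM6.comp psiM6 = MonoidHom.id _ := by
    ext x
    fin_cases x
    · exact compB0
    · exact compB1
  exact ⟨phiM6.toMulEquiv psiM6 hgf hfg, phi0, phi1, phi2, phi3⟩
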